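/- Let X be an F^n-directional quasi-Banach function space over Ω, and let E ⊆ Ω with 0 < μ(E) < ∞. If for every u ∈ F^n one has 1_E u ∈ X, and there is C > 0 such that for every u ∈ F^n there exists a nonzero v ∈ F^n with 1_E v ∈ X' and μ(E)^{-1}‖1_E u‖_X ‖1_E v‖_{X'} ≤ C|u·v|, then the averaging operator T_E f := (avg_E f) 1_E is bounded on X with norm at most C. -/

import Mathlib

open MeasureTheory ENNReal

variable {𝕜 : Type*} [RCLike 𝕜] {n : ℕ}
  [MeasurableSpace (EuclideanSpace 𝕜 (Fin n))] [BorelSpace (EuclideanSpace 𝕜 (Fin n))]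
  {Ω : Type*} [MeasurableSpace Ω]

/-- The Köthe dual (extended-valued) norm of an `𝔽ⁿ`-directional quasi-Banach function space
encoded by its extended norm `eN`. -/
noncomputable def dirDualNorm (μ : Measure Ω) (eN : (Ω → EuclideanSpace 𝕜 (Fin n)) → ℝ≥0∞)
    (g : Ω → EuclideanSpace 𝕜 (Fin n)) : ℝ≥0∞ :=
  ⨆ f ∈ {f : Ω → EuclideanSpace 𝕜 (Fin n) | Measurable f ∧ eN f ≤ 1},
    ∫⁻ x, (‖(inner 𝕜 (f x) (g x) : 𝕜)‖₊ : ℝ≥0∞) ∂μ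

/-- The averaging operator `T_E f := (⨍_E f dμ) 1_E`. -/
noncomputable def avgOp (μ : Measure Ω) (E : Set Ω) (f : Ω → EuclideanSpace 𝕜 (Fin n)) :
    Ω → EuclideanSpace 𝕜 (Fin n) :=
  E.indicator fun _ => ⨍ x in E, f x ∂μ

set_option maxHeartbeats 1000000 in
/-- Let `X` be an `𝔽ⁿ`-directional quasi-Banach function space over `Ω`
(encoded by its extended norm `eN` with the directional ideal property and homogeneity), and
let `E ⊆ Ω` with `0 < μ(E) < ∞`.  If `1_E u ∈ X` for every `u ∈ 𝔽ⁿ`, and there is `C > 0` such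
that for every `u ∈ 𝔽ⁿ` there exists a nonzero `v ∈ 𝔽ⁿ` with `1_E v ∈ X'` and
`‖1_E u‖_X ‖1_E v‖_{X'} ≤ C |u·v| μ(E)`, then the averaging operator `T_E` is bounded on `X`
with norm at most `C`. -/
theorem stmt11 (μ : Measure Ω) [SigmaFinite μ]
    (eN : (Ω → EuclideanSpace 𝕜 (Fin n)) → ℝ≥0∞)
    (hideal : ∀ (h : Ω → 𝕜) (f : Ω → EuclideanSpace 𝕜 (Fin n)),
      Measurable h → (∀ x, ‖h x‖ ≤ 1) → eN (fun x => h x • f x) ≤ eN f)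
    (hhomog : ∀ (c : 𝕜) (f : Ω → EuclideanSpace 𝕜 (Fin n)),
      eN (fun x => c • f x) = ‖c‖₊ * eN f)
    (E : Set Ω) (hE : MeasurableSet E) (hE0 : 0 < μ E) (hEfin : μ E ≠ ⊤)
    (C : ℝ) (hC : 0 < C)
    (hXmem : ∀ u : EuclideanSpace 𝕜 (Fin n), eN (E.indicator fun _ => u) ≠ ⊤)
    (hdual : ∀ u : EuclideanSpace 𝕜 (Fin n), ∃ v : EuclideanSpace 𝕜 (Fin n), v ≠ 0 ∧
      dirDualNorm μ eN (E.indicator fun _ => v) ≠ ⊤ ∧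
      eN (E.indicator fun _ => u) * dirDualNorm μ eN (E.indicator fun _ => v) ≤
        ENNReal.ofReal C * (‖(inner 𝕜 u v : 𝕜)‖₊ : ℝ≥0∞) * μ E) :
    ∀ f : Ω → EuclideanSpace 𝕜 (Fin n), Measurable f →
      eN (avgOp μ E f) ≤ ENNReal.ofReal C * eN f := by
  intro f hf
  have hμ0 : μ E ≠ 0 := hE0.ne'
  have hμr : (μ E).toReal ≠ 0 := (ENNReal.toReal_pos hμ0 hEfin).ne'
  have hC'0 : ENNReal.ofReal C ≠ 0 := by
    simp [ENNReal.ofReal_eq_zero, not_le, hC]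
  have hzero : eN (fun _ : Ω => (0 : EuclideanSpace 𝕜 (Fin n))) = 0 := by
    have h := hhomog 0 f
    simpa using h
  by_cases hNtop : eN f = ⊤
  · rw [hNtop, ENNReal.mul_top hC'0]
    exact le_top
  by_cases hint : IntegrableOn f E μ
  swap
  · have hu0 : (⨍ x in E, f x ∂μ) = 0 := by
      rw [setAverage_eq, integral_undef hint, smul_zero]
    have hrw : avgOp μ E f = fun _ => (0 : EuclideanSpace 𝕜 (Fin n)) := by
      funext x
      simp [avgOp, hu0]
    rw [hrw, hzero]
    exact zero_le
  · set u := ⨍ x in E, f x ∂μ with hu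
    obtain ⟨v, hv0, hDtop, hkey⟩ := hdual u
    set w := (E.indicator fun _ => v : Ω → EuclideanSpace 𝕜 (Fin n)) with hw
    set D := dirDualNorm μ eN w with hD
    set I := ∫⁻ x in E, (‖(inner 𝕜 (f x) v : 𝕜)‖₊ : ℝ≥0∞) ∂μ with hI
    -- test functions lower bound D
    have hBle : ∀ g : Ω → EuclideanSpace 𝕜 (Fin n), Measurable g → eN g ≤ 1 →
        (∫⁻ x in E, (‖(inner 𝕜 (g x) v : 𝕜)‖₊ : ℝ≥0∞) ∂μ) ≤ D := by
      intro g hg hgN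
      have h1 : (∫⁻ x, (‖(inner 𝕜 (g x) (w x) : 𝕜)‖₊ : ℝ≥0∞) ∂μ)
          = ∫⁻ x in E, (‖(inner 𝕜 (g x) v : 𝕜)‖₊ : ℝ≥0∞) ∂μ := by
        rw [← lintegral_indicator hE]
        congr 1
        funext x
        by_cases hx : x ∈ E <;> simp [hw, Set.indicator, hx]
      rw [← h1, hD, dirDualNorm]
      have hmem : g ∈ {f : Ω → EuclideanSpace 𝕜 (Fin n) | Measurable f ∧ eN f ≤ 1} :=
        ⟨hg, hgN⟩
      refine le_trans ?_ (le_iSup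
        (fun f => ⨆ _ : f ∈ {f : Ω → EuclideanSpace 𝕜 (Fin n) | Measurable f ∧ eN f ≤ 1},
          ∫⁻ x, (‖(inner 𝕜 (f x) (w x) : 𝕜)‖₊ : ℝ≥0∞) ∂μ) g)
      exact le_iSup
        (fun _ : g ∈ {f : Ω → EuclideanSpace 𝕜 (Fin n) | Measurable f ∧ eN f ≤ 1} =>
          ∫⁻ x, (‖(inner 𝕜 (g x) (w x) : 𝕜)‖₊ : ℝ≥0∞) ∂μ) hmem
    -- positivity of D
    have hDpos : 0 < D := by
      have hMfin : eN w ≠ ⊤ := hXmem v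
      set r : ℝ := max (eN w).toReal 1 with hr
      have hrpos : (0 : ℝ) < r := lt_of_lt_of_le one_pos (le_max_right _ _)
      set c : 𝕜 := ((r⁻¹ : ℝ) : 𝕜) with hc
      have hwmeas : Measurable w := (measurable_const.indicator hE)
      have hcnorm : (‖c‖₊ : ℝ≥0∞) = ENNReal.ofReal r⁻¹ := by
        rw [← enorm_eq_nnnorm, ← ofReal_norm, hc, RCLike.norm_ofReal,
          abs_of_nonneg (inv_nonneg.mpr hrpos.le)]
      have hgN : eN (fun x => c • w x) ≤ 1 := by
        rw [hhomog]
        calc (‖c‖₊ : ℝ≥0∞) * eN w ≤ ENNReal.ofReal r⁻¹ * ENNReal.ofReal r := by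
              rw [hcnorm]
              refine mul_le_mul_right ?_ _
              rw [← ENNReal.ofReal_toReal hMfin]
              exact ENNReal.ofReal_le_ofReal (le_max_left _ _)
          _ = 1 := by
              rw [← ENNReal.ofReal_mul (inv_nonneg.mpr hrpos.le),
                inv_mul_cancel₀ hrpos.ne', ENNReal.ofReal_one]
      have hle := hBle (fun x => c • w x) (hwmeas.const_smul c) hgN
      have hval : (∫⁻ x in E, (‖(inner 𝕜 (c • w x) v : 𝕜)‖₊ : ℝ≥0∞) ∂μ)
          = ((‖c‖₊ : ℝ≥0∞) * (‖(inner 𝕜 v v : 𝕜)‖₊ : ℝ≥0∞)) * μ E := by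
        have hptw : ∀ x ∈ E, (‖(inner 𝕜 (c • w x) v : 𝕜)‖₊ : ℝ≥0∞)
            = (‖c‖₊ : ℝ≥0∞) * (‖(inner 𝕜 v v : 𝕜)‖₊ : ℝ≥0∞) := by
          intro x hx
          have hwx : w x = v := by rw [hw]; exact Set.indicator_of_mem hx _
          rw [hwx, inner_smul_left, nnnorm_mul, RCLike.nnnorm_conj, ENNReal.coe_mul]
        rw [setLIntegral_congr_fun hE hptw, setLIntegral_const]
      rw [hval] at hle
      refine lt_of_lt_of_le ?_ hle
      have hcne : c ≠ 0 := by
        rw [hc, ne_eq, RCLike.ofReal_eq_zero]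
        exact inv_ne_zero hrpos.ne'
      have h1 : (‖c‖₊ : ℝ≥0∞) ≠ 0 := by simpa using hcne
      have h2 : (‖(inner 𝕜 v v : 𝕜)‖₊ : ℝ≥0∞) ≠ 0 := by
        simpa using (inner_self_ne_zero (𝕜 := 𝕜)).mpr hv0
      exact ENNReal.mul_pos (mul_ne_zero h1 h2) hμ0
    -- averaging inequality
    have hintE : ∫ x in E, f x ∂μ = (μ E).toReal • u := by
      rw [hu, setAverage_eq, smul_smul, measureReal_def, mul_inv_cancel₀ hμr, one_smul]
    have hgint : Integrable (fun x => (inner 𝕜 v (f x) : 𝕜)) (μ.restrict E) :=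
      hint.const_inner v
    have hA : (‖(inner 𝕜 u v : 𝕜)‖₊ : ℝ≥0∞) * μ E ≤ I := by
      have h1 : ∫ x in E, (inner 𝕜 v (f x) : 𝕜) ∂μ = (μ E).toReal • (inner 𝕜 v u : 𝕜) := by
        rw [integral_inner hint, hintE, RCLike.real_smul_eq_coe_smul (K := 𝕜),
          inner_smul_right, ← RCLike.real_smul_eq_coe_mul]
      have h2 : (μ E).toReal * ‖(inner 𝕜 u v : 𝕜)‖ ≤ ∫ x in E, ‖(inner 𝕜 v (f x) : 𝕜)‖ ∂μ := by
        calc (μ E).toReal * ‖(inner 𝕜 u v : 𝕜)‖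
            = ‖(μ E).toReal • (inner 𝕜 v u : 𝕜)‖ := by
              rw [norm_smul, Real.norm_eq_abs, abs_of_nonneg ENNReal.toReal_nonneg,
                norm_inner_symm]
          _ = ‖∫ x in E, (inner 𝕜 v (f x) : 𝕜) ∂μ‖ := by rw [h1]
          _ ≤ ∫ x in E, ‖(inner 𝕜 v (f x) : 𝕜)‖ ∂μ := norm_integral_le_integral_norm _
      have h3 : ENNReal.ofReal (∫ x in E, ‖(inner 𝕜 v (f x) : 𝕜)‖ ∂μ) = I := by
        rw [ofReal_integral_norm_eq_lintegral_enorm hgint, hI]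
        congr 1
        funext x
        rw [← ofReal_norm, ← enorm_eq_nnnorm, ← ofReal_norm, norm_inner_symm]
      calc (‖(inner 𝕜 u v : 𝕜)‖₊ : ℝ≥0∞) * μ E
          = ENNReal.ofReal (‖(inner 𝕜 u v : 𝕜)‖ * (μ E).toReal) := by
            rw [ENNReal.ofReal_mul (norm_nonneg _), ofReal_norm, enorm_eq_nnnorm,
              ENNReal.ofReal_toReal hEfin]
        _ ≤ ENNReal.ofReal (∫ x in E, ‖(inner 𝕜 v (f x) : 𝕜)‖ ∂μ) := by
            rw [mul_comm] at h2
            exact ENNReal.ofReal_le_ofReal h2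
        _ = I := h3
    have hgoal : avgOp μ E f = E.indicator fun _ => u := rfl
    rw [hgoal]
    by_cases hN0 : eN f = 0
    · -- degenerate case
      have hI0 : I = 0 := by
        have hmul : ∀ m : ℕ, (m : ℝ≥0∞) * I ≤ D := by
          intro m
          have hgN : eN (fun x => (m : 𝕜) • f x) ≤ 1 := by
            rw [hhomog, hN0, mul_zero]
            exact zero_le
          have hle := hBle (fun x => (m : 𝕜) • f x) (hf.const_smul ((m : 𝕜))) hgN
          have hval : (∫⁻ x in E, (‖(inner 𝕜 ((m : 𝕜) • f x) v : 𝕜)‖₊ : ℝ≥0∞) ∂μ)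
              = (‖(m : 𝕜)‖₊ : ℝ≥0∞) * I := by
            rw [hI, ← lintegral_const_mul' _ _ ENNReal.coe_ne_top]
            congr 1
            funext x
            rw [inner_smul_left, nnnorm_mul, RCLike.nnnorm_conj, ENNReal.coe_mul]
          have hmn : (‖(m : 𝕜)‖₊ : ℝ≥0∞) = (m : ℝ≥0∞) := by
            rw [← enorm_eq_nnnorm, ← ofReal_norm, RCLike.norm_natCast, ENNReal.ofReal_natCast]
          rw [hval, hmn] at hle
          exact hle
        by_contra hI0
        have htop : (⊤ : ℝ≥0∞) * I ≤ D := by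
          rw [← ENNReal.iSup_natCast, ENNReal.iSup_mul]
          exact iSup_le hmul
        rw [ENNReal.top_mul hI0] at htop
        exact hDtop (top_le_iff.mp htop)
      have huv : (‖(inner 𝕜 u v : 𝕜)‖₊ : ℝ≥0∞) = 0 := by
        have h := hA.trans hI0.le
        rcases mul_eq_zero.mp (le_antisymm h (zero_le)) with h' | h'
        · exact h'
        · exact absurd h' hμ0
      have h0 : eN (E.indicator fun _ => u) * D = 0 := by
        refine le_antisymm ?_ (zero_le)
        calc eN (E.indicator fun _ => u) * D
            ≤ ENNReal.ofReal C * (‖(inner 𝕜 u v : 𝕜)‖₊ : ℝ≥0∞) * μ E := hkey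
          _ = 0 := by rw [huv, mul_zero, zero_mul]
      rcases mul_eq_zero.mp h0 with h | h
      · rw [h]; exact zero_le
      · exact absurd h hDpos.ne'
    · -- main case : 0 < eN f < ⊤
      set r : ℝ := (eN f).toReal with hr
      have hrpos : (0 : ℝ) < r := ENNReal.toReal_pos hN0 hNtop
      set c : 𝕜 := ((r⁻¹ : ℝ) : 𝕜) with hc
      have hcnorm : (‖c‖₊ : ℝ≥0∞) = ENNReal.ofReal r⁻¹ := by
        rw [← enorm_eq_nnnorm, ← ofReal_norm, hc, RCLike.norm_ofReal,
          abs_of_nonneg (inv_nonneg.mpr hrpos.le)]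
      have hgN : eN (fun x => c • f x) ≤ 1 := by
        rw [hhomog, hcnorm, ← ENNReal.ofReal_toReal hNtop, ← hr,
          ← ENNReal.ofReal_mul (inv_nonneg.mpr hrpos.le),
          inv_mul_cancel₀ hrpos.ne', ENNReal.ofReal_one]
      have hle := hBle (fun x => c • f x) (hf.const_smul c) hgN
      have hval : (∫⁻ x in E, (‖(inner 𝕜 (c • f x) v : 𝕜)‖₊ : ℝ≥0∞) ∂μ)
          = ENNReal.ofReal r⁻¹ * I := by
        rw [hI, ← lintegral_const_mul' _ _ ENNReal.ofReal_ne_top]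
        congr 1
        funext x
        rw [inner_smul_left, nnnorm_mul, RCLike.nnnorm_conj, ENNReal.coe_mul, hcnorm]
      rw [hval] at hle
      have hIle : I ≤ eN f * D := by
        calc I = ENNReal.ofReal r * (ENNReal.ofReal r⁻¹ * I) := by
              rw [← mul_assoc, ← ENNReal.ofReal_mul hrpos.le,
                mul_inv_cancel₀ hrpos.ne', ENNReal.ofReal_one, one_mul]
          _ ≤ ENNReal.ofReal r * D := mul_le_mul_right hle _
          _ = eN f * D := by rw [hr, ENNReal.ofReal_toReal hNtop]
      have hchain : eN (E.indicator fun _ => u) * D ≤ (ENNReal.ofReal C * eN f) * D := by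
        calc eN (E.indicator fun _ => u) * D
            ≤ ENNReal.ofReal C * (‖(inner 𝕜 u v : 𝕜)‖₊ : ℝ≥0∞) * μ E := hkey
          _ = ENNReal.ofReal C * ((‖(inner 𝕜 u v : 𝕜)‖₊ : ℝ≥0∞) * μ E) := by
              rw [mul_assoc]
          _ ≤ ENNReal.ofReal C * I := mul_le_mul_right hA _
          _ ≤ ENNReal.ofReal C * (eN f * D) := mul_le_mul_right hIle _
          _ = (ENNReal.ofReal C * eN f) * D := by rw [mul_assoc]
      exact (ENNReal.mul_le_mul_iff_left hDpos.ne' hDtop).mp hchain
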